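/- Let p be a prime and r ≥ 1 with q = p^r ≥ 3, and let G = F ⋊ Fˣ be the semidirect product of the additive group of F = GaloisField p r by its unit group Fˣ acting by multiplication. Then there exist a bijection σ : ZMod (q−1) × F ≃ G and a generator z of the cyclic group Fˣ such that, reindexing each adjacency matrix A_C ∈ Matrix G G ℂ of the group association scheme by σ (i.e., taking the matrix whose ((a,u),(b,v)) entry is (A_C)_{σ(a,u), σ(b,v)}): (i) the reindexed adjacency matrix of the class {e} is the identity matrix I ⊗ I; (ii) the reindexed adjacency matrix of the conjugacy class G' ∖ {e} is the Kronecker product I ⊗ (J − I), where J is the all-ones q × q matrix; and (iii) for every i with 1 ≤ i ≤ q−2, the reindexed adjacency matrix of the conjugacy class of the element (0, zⁱ) is the Kronecker product Qⁱ ⊗ J, where Q ∈ Matrix (ZMod (q−1)) (ZMod (q−1)) ℂ is defined by Q_{a,b} = 1 if b = a + 1 and Q_{a,b} = 0 otherwise. -/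

import Mathlib

open scoped Classical Pointwise

/-- The conjugacy class of `x` in `G`. -/
def conjClass {G : Type*} [Group G] (x : G) : Set G := {y | ∃ g : G, g * x * g⁻¹ = y}

/-- The adjacency matrix of a subset `C` of `G`. -/
noncomputable def adjMat (G : Type*) [Group G] (C : Set G) : Matrix G G ℂ :=
  Matrix.of fun x y => if y * x⁻¹ ∈ C then (1 : ℂ) else 0

/-- The dual idempotent of a subset `C` of `G` (base point the identity). -/
noncomputable def dualIdem (G : Type*) [Group G] (C : Set G) : Matrix G G ℂ :=
  Matrix.of fun x y => if x = y ∧ y ∈ C then (1 : ℂ) else 0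

/-- The Terwilliger algebra of the group association scheme of `G`, with base point `e`. -/
noncomputable def TerwAlg (G : Type*) [Group G] [Fintype G] [DecidableEq G] : Subalgebra ℂ (Matrix G G ℂ) :=
  Algebra.adjoin ℂ
    ((Set.range fun x : G => adjMat G (conjClass x)) ∪
     (Set.range fun x : G => dualIdem G (conjClass x)))

/-- A Camina group: a nonabelian group in which every conjugacy class outside the
commutator subgroup is a coset of the commutator subgroup. -/
def IsCamina (G : Type*) [Group G] : Prop :=
  (¬ ∀ a b : G, a * b = b * a) ∧
  ∀ x : G, x ∉ commutator G → conjClass x = x • (commutator G : Set G)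

/-- The action of the unit group of a field on (the multiplicative version of) its
additive group, by multiplication. -/
noncomputable def frobAct (F : Type*) [Field F] : Fˣ →* MulAut (Multiplicative F) where
  toFun u := AddEquiv.toMultiplicative (DistribMulAction.toAddAut Fˣ F u)
  map_one' := by ext x; simp [DistribMulAction.toAddAut] <;> rfl
  map_mul' u v := by ext x; simp [DistribMulAction.toAddAut, mul_smul] <;> rfl


/-- The Frobenius group `F ⋊ Fˣ` for `F` the field with `p ^ r` elements. -/
abbrev FrobGrp (p r : ℕ) [Fact p.Prime] : Type :=
  Multiplicative (GaloisField p r) ⋊[frobAct (GaloisField p r)] (GaloisField p r)ˣ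

open Kronecker

/-- The cyclic-shift permutation matrix `Q` on `ZMod m`. -/
noncomputable def cycShift (m : ℕ) : Matrix (ZMod m) (ZMod m) ℂ :=
  Matrix.of fun a b => if b = a + 1 then (1 : ℂ) else 0

section Aux

variable {F : Type*} [Field F]

lemma frobAct_apply (u : Fˣ) (x : Multiplicative F) :
    frobAct F u x = Multiplicative.ofAdd ((u : F) * x.toAdd) := rfl

lemma mul_inv_formula (x y : Multiplicative F) (u v : Fˣ) :
    (⟨y, v⟩ : Multiplicative F ⋊[frobAct F] Fˣ) * (⟨x, u⟩ : Multiplicative F ⋊[frobAct F] Fˣ)⁻¹ =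
      ⟨Multiplicative.ofAdd (y.toAdd - ((v * u⁻¹ : Fˣ) : F) * x.toAdd), v * u⁻¹⟩ := by
  refine SemidirectProduct.ext ?_ rfl
  show y * (frobAct F v) ((frobAct F u⁻¹) x⁻¹) = _
  simp only [frobAct_apply, toAdd_inv, toAdd_ofAdd, Units.val_mul]
  rw [← ofAdd_toAdd y, ← ofAdd_add]
  congr 1
  rw [toAdd_ofAdd]
  ring

lemma conj_formula (y : F) (u : Fˣ) :
    (⟨.ofAdd y, 1⟩ : Multiplicative F ⋊[frobAct F] Fˣ) * ⟨1, u⟩ *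
      (⟨.ofAdd y, 1⟩ : Multiplicative F ⋊[frobAct F] Fˣ)⁻¹ =
      ⟨.ofAdd ((1 - (u : F)) * y), u⟩ := by
  have h1 : (⟨.ofAdd y, 1⟩ : Multiplicative F ⋊[frobAct F] Fˣ) * ⟨1, u⟩ = ⟨.ofAdd y, u⟩ := by
    refine SemidirectProduct.ext ?_ (one_mul u)
    show Multiplicative.ofAdd y * (frobAct F 1) 1 = _
    simp
  rw [h1, mul_inv_formula]
  refine SemidirectProduct.ext ?_ (by simp)
  simp only [toAdd_ofAdd, mul_one, inv_one, Units.val_mul, Units.val_one]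
  congr 1
  ring

lemma conjClass_one' : conjClass (1 : Multiplicative F ⋊[frobAct F] Fˣ) = {1} := by
  ext g; simp [conjClass]

lemma conjClass_inr (u : Fˣ) (hu : u ≠ 1) :
    conjClass (⟨1, u⟩ : Multiplicative F ⋊[frobAct F] Fˣ) =
      {g : Multiplicative F ⋊[frobAct F] Fˣ | g.right = u} := by
  have hu' : (1 : F) - (u : F) ≠ 0 := by
    intro h
    exact hu (Units.ext (by push_cast; linear_combination -h))
  ext g
  constructor
  · rintro ⟨h, rfl⟩
    show (h * _ * h⁻¹).right = u
    simp [mul_comm]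
  · intro hg
    refine ⟨⟨.ofAdd ((1 - (u : F))⁻¹ * g.left.toAdd), 1⟩, ?_⟩
    rw [conj_formula]
    refine SemidirectProduct.ext ?_ hg.symm
    show Multiplicative.ofAdd _ = g.left
    rw [← mul_assoc, mul_inv_cancel₀ hu', one_mul, ofAdd_toAdd]

lemma commutator_eq' (h : ∃ u : Fˣ, u ≠ 1) :
    commutator (Multiplicative F ⋊[frobAct F] Fˣ) = (SemidirectProduct.rightHom).ker := by
  apply le_antisymm (Abelianization.commutator_subset_ker _)
  intro g hg
  obtain ⟨u, hu⟩ := h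
  have hu' : (1 : F) - (u : F) ≠ 0 := by
    intro h
    exact hu (Units.ext (by push_cast; linear_combination -h))
  have hgr : g.right = 1 := hg
  open scoped commutatorElement in
  have : g = ⁅(⟨.ofAdd ((1 - (u : F))⁻¹ * g.left.toAdd), 1⟩ :
      Multiplicative F ⋊[frobAct F] Fˣ), ⟨1, u⟩⁆ := by
    rw [commutatorElement_def, conj_formula]
    refine (SemidirectProduct.ext ?_ ?_).symm
    · show Multiplicative.ofAdd _ * (frobAct F u) ((frobAct F u⁻¹) 1⁻¹) = g.left
      simp only [inv_one, map_one, mul_one]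
      rw [← mul_assoc, mul_inv_cancel₀ hu', one_mul, ofAdd_toAdd]
    · show u * ((⟨1, u⟩ : Multiplicative F ⋊[frobAct F] Fˣ))⁻¹.right = g.right
      rw [hgr]; show u * u⁻¹ = 1; simp
  rw [commutator_def, this]
  exact Subgroup.commutator_mem_commutator (Subgroup.mem_top _) (Subgroup.mem_top _)

lemma cycShift_pow (m i : ℕ) [NeZero m] :
    (cycShift m) ^ i = Matrix.of fun a b => if b = a + (i : ZMod m) then (1 : ℂ) else 0 := by
  induction i with
  | zero => ext a b; simp [Matrix.one_apply, eq_comm]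
  | succ i ih =>
    ext a b
    rw [pow_succ, ih, Matrix.mul_apply]
    simp only [cycShift, Matrix.of_apply, ite_mul, one_mul, zero_mul]
    rw [Finset.sum_ite_eq' Finset.univ (a + (i : ZMod m)) (fun c => if b = c + 1 then (1:ℂ) else 0)]
    simp [add_assoc]

end Aux

/-- Theorem 5.3: the adjacency matrices of the group association scheme of the Frobenius
group `ℤ_p^r ⋊ ℤ_{p^r-1}`, suitably reindexed, are Kronecker products exhibiting the
wreath-product structure `K_{p^r} ≀ G(ℤ_{p^r-1})`. -/
theorem stmt15 (p r : ℕ) [Fact p.Prime] (hr : 1 ≤ r) (hq : 3 ≤ p ^ r)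
    [NeZero (p ^ r - 1)] :
    ∃ (σ : ZMod (p ^ r - 1) × GaloisField p r ≃ FrobGrp p r)
      (z : (GaloisField p r)ˣ),
      (∀ u : (GaloisField p r)ˣ, u ∈ Subgroup.zpowers z) ∧
      (Matrix.of (fun a b => adjMat (FrobGrp p r) (conjClass (1 : FrobGrp p r)) (σ a) (σ b)) =
        (1 : Matrix (ZMod (p ^ r - 1)) (ZMod (p ^ r - 1)) ℂ) ⊗ₖ
          (1 : Matrix (GaloisField p r) (GaloisField p r) ℂ)) ∧
      (Matrix.of (fun a b =>
          adjMat (FrobGrp p r)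
            ((commutator (FrobGrp p r) : Set (FrobGrp p r)) \ {1}) (σ a) (σ b)) =
        (1 : Matrix (ZMod (p ^ r - 1)) (ZMod (p ^ r - 1)) ℂ) ⊗ₖ
          ((Matrix.of fun _ _ : GaloisField p r => (1 : ℂ)) - 1)) ∧
      (∀ i : ℕ, 1 ≤ i → i ≤ p ^ r - 2 →
        Matrix.of (fun a b =>
            adjMat (FrobGrp p r)
              (conjClass (SemidirectProduct.inr (z ^ i) : FrobGrp p r)) (σ a) (σ b)) =
          ((cycShift (p ^ r - 1)) ^ i) ⊗ₖ (Matrix.of fun _ _ : GaloisField p r => (1 : ℂ))) := by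
  set F := GaloisField p r with hF
  set n := p ^ r - 1 with hn
  haveI : Fintype F := Fintype.ofFinite _
  have hcard : Fintype.card F = p ^ r := by
    rw [← Nat.card_eq_fintype_card]; exact GaloisField.card p r (by omega)
  have hcardu : Fintype.card Fˣ = n := by rw [Fintype.card_units, hcard]
  obtain ⟨z, hz⟩ := IsCyclic.exists_generator (α := Fˣ)
  have hord : orderOf z = n := by
    rw [orderOf_eq_card_of_forall_mem_zpowers hz, Nat.card_eq_fintype_card, hcardu]
  have hzeq : ∀ s t : ℕ, z ^ s = z ^ t ↔ (s : ZMod n) = (t : ZMod n) := by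
    intro s t
    rw [pow_eq_pow_iff_modEq, hord, ZMod.natCast_eq_natCast_iff]
  have hvcast : ∀ a : ZMod n, ((a.val : ℕ) : ZMod n) = a := by
    intro a; rw [ZMod.natCast_val, ZMod.cast_id]
  -- a nontrivial unit exists
  have hex : ∃ u : Fˣ, u ≠ 1 := by
    have : 1 < Fintype.card Fˣ := by omega
    obtain ⟨u, hu⟩ := Fintype.exists_ne_of_one_lt_card this 1
    exact ⟨u, hu⟩
  -- the bijection
  set f : ZMod n × F → FrobGrp p r :=
    fun q => ⟨Multiplicative.ofAdd q.2, z ^ (q.1).val⟩ with hf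
  have hbij : Function.Bijective f := by
    constructor
    · rintro ⟨a, x⟩ ⟨b, y⟩ h
      rw [hf, SemidirectProduct.ext_iff] at h
      obtain ⟨h1, h2⟩ := h
      have := (hzeq _ _).mp h2
      rw [hvcast, hvcast] at this
      exact Prod.ext this (by simpa using h1)
    · intro g
      obtain ⟨m, hm⟩ := (mem_powers_iff_mem_zpowers).mpr (hz g.right)
      refine ⟨⟨(m : ZMod n), g.left.toAdd⟩, ?_⟩
      refine SemidirectProduct.ext (by simp only [hf]; exact ofAdd_toAdd _) ?_
      show z ^ ((m : ZMod n)).val = g.right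
      rw [← hm]
      exact (hzeq _ _).mpr (by rw [hvcast])
  set σ : ZMod n × F ≃ FrobGrp p r := Equiv.ofBijective f hbij with hσ
  have hσa : ∀ q : ZMod n × F, σ q = f q := fun q => rfl

  have hmul : ∀ (a b : ZMod n) (x y : F), σ (b, y) * (σ (a, x))⁻¹ =
      (⟨Multiplicative.ofAdd (y - ((z ^ b.val * (z ^ a.val)⁻¹ : Fˣ) : F) * x),
        z ^ b.val * (z ^ a.val)⁻¹⟩ : FrobGrp p r) := by
    intro a b x y
    show (⟨.ofAdd y, z ^ b.val⟩ : FrobGrp p r) * (⟨.ofAdd x, z ^ a.val⟩ : FrobGrp p r)⁻¹ = _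
    simpa using mul_inv_formula (Multiplicative.ofAdd x) (Multiplicative.ofAdd y)
      (z ^ a.val) (z ^ b.val)
  have hright : ∀ (a b : ZMod n), z ^ b.val * (z ^ a.val)⁻¹ = 1 ↔ a = b := by
    intro a b
    rw [mul_inv_eq_one, hzeq, hvcast, hvcast, eq_comm]
  refine ⟨σ, z, hz, ?_, ?_, ?_⟩
  · -- identity class
    ext ⟨a, x⟩ ⟨b, y⟩
    simp only [Matrix.of_apply, adjMat]
    rw [hmul, conjClass_one']
    have hcond : (⟨Multiplicative.ofAdd (y - ((z ^ b.val * (z ^ a.val)⁻¹ : Fˣ) : F) * x),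
          z ^ b.val * (z ^ a.val)⁻¹⟩ : FrobGrp p r) ∈ ({1} : Set (FrobGrp p r)) ↔
        (a = b ∧ x = y) := by
      rw [Set.mem_singleton_iff]
      constructor
      · intro h
        have h2 : z ^ b.val * (z ^ a.val)⁻¹ = 1 := congrArg SemidirectProduct.right h
        have hab : a = b := (hright a b).mp h2
        have h1 := congrArg SemidirectProduct.left h
        rw [h2] at h1
        simp only [Units.val_one, one_mul, SemidirectProduct.one_left] at h1
        have : y - x = 0 := by simpa using congrArg Multiplicative.toAdd h1
        exact ⟨hab, (sub_eq_zero.mp this).symm⟩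
      · rintro ⟨rfl, rfl⟩
        refine SemidirectProduct.ext ?_ (by simp)
        simp
    simp only [hcond, Matrix.kroneckerMap_apply]
    by_cases h1 : a = b <;> by_cases h2 : x = y <;>
      simp [Matrix.one_apply, h1, h2]
  · -- commutator minus identity
    ext ⟨a, x⟩ ⟨b, y⟩
    simp only [Matrix.of_apply, adjMat]
    rw [hmul, commutator_eq' hex]
    have hcond : (⟨Multiplicative.ofAdd (y - ((z ^ b.val * (z ^ a.val)⁻¹ : Fˣ) : F) * x),
          z ^ b.val * (z ^ a.val)⁻¹⟩ : FrobGrp p r) ∈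
          ((SemidirectProduct.rightHom.ker : Subgroup (FrobGrp p r)) : Set (FrobGrp p r)) \ {1} ↔
        (a = b ∧ x ≠ y) := by
      rw [Set.mem_diff, SetLike.mem_coe, MonoidHom.mem_ker, Set.mem_singleton_iff]
      have hker : SemidirectProduct.rightHom
          (⟨Multiplicative.ofAdd (y - ((z ^ b.val * (z ^ a.val)⁻¹ : Fˣ) : F) * x),
            z ^ b.val * (z ^ a.val)⁻¹⟩ : FrobGrp p r) = z ^ b.val * (z ^ a.val)⁻¹ := rfl
      rw [hker]
      constructor
      · rintro ⟨h2, hne⟩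
        have hab : a = b := (hright a b).mp h2
        refine ⟨hab, fun hxy => hne ?_⟩
        refine SemidirectProduct.ext ?_ (by simpa using h2)
        rw [h2]
        simp [hxy]
      · rintro ⟨rfl, hxy⟩
        have h2 : z ^ a.val * (z ^ a.val)⁻¹ = 1 := mul_inv_cancel _
        refine ⟨h2, fun hg => ?_⟩
        have h1 := congrArg SemidirectProduct.left hg
        rw [h2] at h1
        simp only [Units.val_one, one_mul, SemidirectProduct.one_left] at h1
        have : y - x = 0 := by simpa using congrArg Multiplicative.toAdd h1
        exact hxy (sub_eq_zero.mp this).symm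
    simp only [hcond, Matrix.kroneckerMap_apply]
    by_cases h1 : a = b <;> by_cases h2 : x = y <;>
      simp [Matrix.one_apply, Matrix.sub_apply, h1, h2]
  · -- the cyclic classes
    intro i hi1 hi2
    have hilt : i < n := by omega
    have hzi : (z : Fˣ) ^ i ≠ 1 := pow_ne_one_of_lt_orderOf (by omega) (by omega)
    have hinr : (SemidirectProduct.inr (z ^ i) : FrobGrp p r) = ⟨1, z ^ i⟩ := rfl
    ext ⟨a, x⟩ ⟨b, y⟩
    simp only [Matrix.of_apply, adjMat]
    rw [hmul, hinr, conjClass_inr _ hzi]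
    have hcond : ((⟨Multiplicative.ofAdd (y - ((z ^ b.val * (z ^ a.val)⁻¹ : Fˣ) : F) * x),
          z ^ b.val * (z ^ a.val)⁻¹⟩ : FrobGrp p r) ∈
          {g : FrobGrp p r | g.right = z ^ i}) ↔ b = a + (i : ZMod n) := by
      show z ^ b.val * (z ^ a.val)⁻¹ = z ^ i ↔ _
      rw [mul_inv_eq_iff_eq_mul, ← pow_add, hzeq]
      push_cast
      rw [hvcast, hvcast]
      constructor
      · intro h; rw [h]; ring
      · intro h; rw [h]; ring
    simp only [hcond, Matrix.kroneckerMap_apply, cycShift_pow]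
    by_cases h1 : b = a + (i : ZMod n)
    · rw [if_pos (hcond.mpr h1)]; simp [h1]
    · rw [if_neg (mt hcond.mp h1)]; simp [h1]
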